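/- Let Ω be an open subset of ℝⁿ and let f : ℝⁿ → ℝ be continuous on Ω and differentiable at H^k-almost every point of Ω, where k is a nonnegative integer with k < n. Then for every point x ∈ Ω at which f is differentiable, ‖∇f(x)‖ is at most the essential supremum of ‖∇f‖ over Ω with respect to Lebesgue measure on ℝⁿ. -/

import Mathlib

open MeasureTheory ENNReal NNReal

/-- Pointwise bound (key step of the main theorem): if `f : ℝⁿ → ℝ` is continuous on an open set
`Ω` and differentiable at `H^k`-a.e. point of `Ω` for a nonnegative integer `k < n`, then at
every point `x ∈ Ω` of differentiability, `‖∇f(x)‖` is at most the essential supremum of `‖∇f‖`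
over `Ω` with respect to Lebesgue measure. -/
theorem stmt_14 {n k : ℕ} (hk : k < n)
    (Ω : Set (EuclideanSpace ℝ (Fin n))) (hΩ : IsOpen Ω)
    (f : EuclideanSpace ℝ (Fin n) → ℝ) (hf : ContinuousOn f Ω)
    (hdiff : ∀ᵐ x ∂((μH[(k : ℝ)] : Measure (EuclideanSpace ℝ (Fin n))).restrict Ω),
      DifferentiableAt ℝ f x) :
    ∀ x ∈ Ω, DifferentiableAt ℝ f x →
      (‖fderiv ℝ f x‖₊ : ℝ≥0∞) ≤
        essSup (fun y => (‖fderiv ℝ f y‖₊ : ℝ≥0∞)) (volume.restrict Ω) := by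
  obtain ⟨m, rfl⟩ : ∃ m, n = m + 1 := ⟨n - 1, (Nat.succ_pred_eq_of_pos (Nat.pos_of_ne_zero (by omega))).symm⟩
  intro x hx hdx
  set L := essSup (fun y => (‖fderiv ℝ f y‖₊ : ℝ≥0∞)) (volume.restrict Ω) with hLdef
  rcases eq_top_or_lt_top L with hL | hL
  · rw [hL]; exact le_top
  set C : ℝ := L.toReal with hCdef
  have hC0 : 0 ≤ C := ENNReal.toReal_nonneg
  have hΩm : MeasurableSet Ω := hΩ.measurableSet
  -- the non-differentiability set
  set N := {y : EuclideanSpace ℝ (Fin (m + 1)) | y ∈ Ω ∧ ¬ DifferentiableAt ℝ f y} with hNdef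
  have hN : μH[(k : ℝ)] N = 0 := by
    rw [ae_restrict_iff' hΩm] at hdiff
    refine measure_mono_null (fun y hy => ?_) (ae_iff.mp hdiff)
    exact fun h => hy.2 (h hy.1)
  have hNm : μH[(m : ℝ)] N = 0 := by
    rcases eq_or_lt_of_le (Nat.lt_succ_iff.mp hk) with he | hlt
    · exact he ▸ hN
    · have hcast : ((k : ℝ≥0) : ℝ) = (k : ℝ) := by norm_cast
      have h1 : μH[((k : ℝ≥0) : ℝ)] N = 0 := by rw [hcast]; exact hN
      have h2 : dimH N ≤ (k : ℝ≥0) := dimH_le_of_hausdorffMeasure_ne_top (by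
        rw [h1]; exact zero_ne_top)
      have h3 : dimH N < ((m : ℝ≥0) : ℝ≥0∞) := lt_of_le_of_lt h2 (by exact_mod_cast hlt)
      have h4 := hausdorffMeasure_of_dimH_lt h3
      have hcast2 : ((m : ℝ≥0) : ℝ) = (m : ℝ) := by norm_cast
      rwa [hcast2] at h4
  -- the set where the gradient is large
  have hmeasf : Measurable (fderiv ℝ f) := measurable_fderiv ℝ f
  set B := {y : EuclideanSpace ℝ (Fin (m + 1)) | y ∈ Ω ∧ C < ‖fderiv ℝ f y‖} with hBdef
  have hBmeas : MeasurableSet B :=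
    hΩm.inter (measurableSet_lt measurable_const hmeasf.norm)
  have hB : volume B = 0 := by
    have h1 := ae_le_essSup (μ := volume.restrict Ω) (fun y => (‖fderiv ℝ f y‖₊ : ℝ≥0∞))
    rw [ae_restrict_iff' hΩm] at h1
    refine measure_mono_null ?_ (ae_iff.mp h1)
    intro y hy
    simp only [Set.mem_setOf_eq, Classical.not_imp]
    refine ⟨hy.1, fun h2 => ?_⟩
    have h3 : ‖fderiv ℝ f y‖ ≤ C := by
      have := ENNReal.toReal_mono hL.ne h2
      simpa using this
    exact absurd h3 (not_le.mpr hy.2)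

  -- Reduce to a directional bound
  suffices hnorm : ‖fderiv ℝ f x‖ ≤ C by
    have h1 : (‖fderiv ℝ f x‖₊ : ℝ≥0∞) = ENNReal.ofReal ‖fderiv ℝ f x‖ :=
      (ofReal_norm _).symm
    rw [h1, ← ENNReal.ofReal_toReal hL.ne]
    exact ENNReal.ofReal_le_ofReal hnorm
  suffices hdir : ∀ v : EuclideanSpace ℝ (Fin (m + 1)), ‖v‖ = 1 → |fderiv ℝ f x v| ≤ C by
    refine ContinuousLinearMap.opNorm_le_bound _ hC0 fun u => ?_
    rcases eq_or_ne u 0 with rfl | hu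
    · simp
    · have hnu : (0:ℝ) < ‖u‖ := norm_pos_iff.2 hu
      have h1 : ‖(‖u‖⁻¹ • u : EuclideanSpace ℝ (Fin (m+1)))‖ = 1 := by
        rw [norm_smul, norm_inv, norm_norm, inv_mul_cancel₀ hnu.ne']
      have h2 := hdir _ h1
      rw [_root_.map_smul] at h2
      have : |fderiv ℝ f x u| ≤ C * ‖u‖ := by
        rw [smul_eq_mul, abs_mul, abs_inv, abs_norm] at h2
        calc |fderiv ℝ f x u| = ‖u‖ * (‖u‖⁻¹ * |fderiv ℝ f x u|) := by
              field_simp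
          _ ≤ ‖u‖ * C := by
              exact mul_le_mul_of_nonneg_left h2 hnu.le
          _ = C * ‖u‖ := mul_comm _ _
      simpa [Real.norm_eq_abs] using this
  intro v hv
  -- orthonormal basis with first vector v
  have hcard : Module.finrank ℝ (EuclideanSpace ℝ (Fin (m+1))) = Fintype.card (Fin (m+1)) := by
    simp
  have hvon : Orthonormal ℝ (Set.restrict {(0 : Fin (m+1))} (fun _ => v)) := by
    rw [orthonormal_iff_ite]
    intro i j
    have hij : i = j := Subsingleton.elim i j
    subst hij
    rw [if_pos rfl]
    change inner ℝ v v = 1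
    rw [real_inner_self_eq_norm_sq, hv, one_pow]
  obtain ⟨b, hb⟩ := hvon.exists_orthonormalBasis_extension_of_card_eq hcard
  have hbv : b 0 = v := hb 0 rfl
  -- the parametrization of lines in direction `v`
  set Ψ : ((Fin m → ℝ) × ℝ) → EuclideanSpace ℝ (Fin (m+1)) := fun p =>
    b.repr.symm ((WithLp.equiv 2 (Fin (m+1) → ℝ)).symm ((0 : Fin (m+1)).insertNth p.2 p.1))
    with hΨdef
  have hΨadd : ∀ w c t, Ψ (w, c + t) = Ψ (w, c) + t • v := by
    intro w c t
    have h1 : (0 : Fin (m+1)).insertNth (c + t) w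
        = (0 : Fin (m+1)).insertNth c w + (Pi.single (0 : Fin (m+1)) t : Fin (m+1) → ℝ) := by
      have h2 := Fin.insertNth_add (α := fun _ : Fin (m+1) => ℝ) (0 : Fin (m+1)) c t w (0 : ∀ _ : Fin m, ℝ)
      rw [add_zero] at h2
      rw [h2, Fin.insertNth_zero_right]
    have h3 : (Pi.single (0 : Fin (m+1)) t : Fin (m+1) → ℝ)
        = t • (Pi.single (0 : Fin (m+1)) (1:ℝ) : Fin (m+1) → ℝ) := by
      rw [← Pi.single_smul, smul_eq_mul, mul_one]
    show b.repr.symm ((WithLp.equiv 2 (Fin (m+1) → ℝ)).symm ((0 : Fin (m+1)).insertNth (c + t) w))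
      = Ψ (w, c) + t • v
    rw [h1, WithLp.equiv_symm_apply, WithLp.toLp_add, map_add, h3, WithLp.toLp_smul, _root_.map_smul,
      show WithLp.toLp 2 (Pi.single (0 : Fin (m+1)) (1:ℝ)) = EuclideanSpace.single (0 : Fin (m+1)) (1:ℝ) from rfl, OrthonormalBasis.repr_symm_single, hbv]
    rfl
  have hΨline : ∀ w c c', Ψ (w, c') = Ψ (w, c) + (c' - c) • v := by
    intro w c c'
    have := hΨadd w c (c' - c)
    rwa [add_sub_cancel] at this
  have hΨcont : Continuous Ψ := by
    exact b.repr.symm.continuous.comp ((PiLp.continuous_toLp 2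
      (fun _ : Fin (m+1) => ℝ)).comp (Continuous.finInsertNth (A := fun _ : Fin (m+1) => ℝ) 0 continuous_snd continuous_fst))
  have hΨmp : MeasurePreserving Ψ volume volume := by
    have h1 : MeasurePreserving (Prod.swap : (Fin m → ℝ) × ℝ → ℝ × (Fin m → ℝ))
        volume volume := by
      rw [Measure.volume_eq_prod, Measure.volume_eq_prod]
      exact Measure.measurePreserving_swap
    have h2 : MeasurePreserving ((MeasurableEquiv.piFinSuccAbove (fun _ : Fin (m+1) => ℝ) 0).symm)
        volume volume :=
      (volume_preserving_piFinSuccAbove (fun _ : Fin (m+1) => ℝ) 0).symm _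
    have h3 := PiLp.volume_preserving_toLp (Fin (m+1))
    have h4 := b.repr.symm.measurePreserving
    have h5 := h4.comp (h3.comp (h2.comp h1))
    have hfun : Ψ = (⇑b.repr.symm) ∘ (⇑(WithLp.equiv 2 (Fin (m+1) → ℝ)).symm) ∘
        (⇑(MeasurableEquiv.piFinSuccAbove (fun _ : Fin (m+1) => ℝ) 0).symm) ∘ Prod.swap := by
      funext p
      simp only [Function.comp_apply, MeasurableEquiv.piFinSuccAbove_symm_apply, Prod.fst_swap,
        Prod.snd_swap, hΨdef, Fin.insertNthEquiv, Equiv.coe_fn_mk, Prod.swap]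
    rw [hfun]
    exact h5
  have fub : ∀ S : Set (EuclideanSpace ℝ (Fin (m+1))), MeasurableSet S → volume S = 0 →
      ∀ᵐ w : Fin m → ℝ, ∀ᵐ c : ℝ, Ψ (w, c) ∉ S := by
    intro S hSm hS0
    have h1 : volume (Ψ ⁻¹' S) = 0 := by
      rw [hΨmp.measure_preimage hSm.nullMeasurableSet]; exact hS0
    have h2 : MeasurableSet (Ψ ⁻¹' S) := hΨmp.measurable hSm
    rw [Measure.volume_eq_prod] at h1
    have h3 := (Measure.measure_prod_null h2).mp h1
    filter_upwards [h3] with w hw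
    have h4 := measure_eq_zero_iff_ae_notMem.mp hw
    filter_upwards [h4] with c hc
    exact hc
  -- the projection along `v`
  set π : EuclideanSpace ℝ (Fin (m+1)) → (Fin m → ℝ) := fun y j =>
    b.repr y ((0 : Fin (m+1)).succAbove j) with hπdef
  have hπΨ : ∀ w c, π (Ψ (w, c)) = w := by
    intro w c
    funext j
    simp only [hπdef, hΨdef, LinearIsometryEquiv.apply_symm_apply,
      WithLp.equiv_symm_apply, PiLp.toLp_apply, Fin.insertNth_apply_succAbove]
  have hπlip : LipschitzWith 1 π := by
    have l1 : LipschitzWith 1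
        (fun (u : Fin (m+1) → ℝ) (j : Fin m) => u ((0 : Fin (m+1)).succAbove j)) :=
      LipschitzWith.of_dist_le_mul fun u u' => by
        simp only [NNReal.coe_one, one_mul]
        exact (dist_pi_le_iff dist_nonneg).2 fun j => dist_le_pi_dist u u' _
    have l2 := PiLp.lipschitzWith_ofLp 2 (fun _ : Fin (m+1) => ℝ)
    have l3 := b.repr.lipschitz
    have l4 := (l1.comp l2).comp l3
    rw [mul_one, mul_one] at l4
    exact l4
  have hπim : volume (π '' N) = 0 := by
    have h1 := hπlip.hausdorffMeasure_image_le (by positivity : (0:ℝ) ≤ (m:ℝ)) N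
    rw [hNm, mul_zero] at h1
    have h2 : (μH[(m : ℝ)] : Measure (Fin m → ℝ)) = volume := by
      have h3 := hausdorffMeasure_pi_real (ι := Fin m)
      simpa using h3
    rw [← h2]
    exact le_antisymm h1 zero_le
  set w0 : Fin m → ℝ := fun j => b.repr x ((0 : Fin (m+1)).succAbove j) with hw0def
  set c0 : ℝ := b.repr x 0 with hc0def
  have hΨx : Ψ (w0, c0) = x := by
    have h1 : (0 : Fin (m+1)).insertNth c0 w0
        = WithLp.equiv 2 (Fin (m+1) → ℝ) (b.repr x) := by
      exact Fin.insertNth_self_removeNth 0 _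
    show b.repr.symm ((WithLp.equiv 2 (Fin (m+1) → ℝ)).symm ((0 : Fin (m+1)).insertNth c0 w0)) = x
    rw [h1, Equiv.symm_apply_apply, LinearIsometryEquiv.symm_apply_apply]
  obtain ⟨R, hR0, hRΩ⟩ := Metric.isOpen_iff.mp hΩ x hx
  -- key estimate along the segment
  have key : ∀ t0 ∈ Set.Ioo (0:ℝ) (R/2), |f (x + t0 • v) - f x| ≤ C * t0 := by
    intro t0 ht0
    obtain ⟨ht0pos, ht0R⟩ := ht0
    have hxend : x + t0 • v ∈ Ω := by
      apply hRΩ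
      rw [Metric.mem_ball, dist_eq_norm, add_sub_cancel_left, norm_smul, hv, mul_one,
        Real.norm_eq_abs, abs_of_pos ht0pos]
      linarith
    refine le_of_forall_pos_le_add fun ε hε => ?_
    have hcx : ContinuousAt f x := hf.continuousAt (hΩ.mem_nhds hx)
    have hcx2 : ContinuousAt f (x + t0 • v) := hf.continuousAt (hΩ.mem_nhds hxend)
    have hΨc1 : ContinuousAt (fun w : Fin m → ℝ => Ψ (w, c0)) w0 :=
      (hΨcont.comp (continuous_id.prodMk continuous_const)).continuousAt
    have hΨc2 : ContinuousAt (fun w : Fin m → ℝ => Ψ (w, c0 + t0)) w0 :=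
      (hΨcont.comp (continuous_id.prodMk continuous_const)).continuousAt
    have hΨw2 : Ψ (w0, c0 + t0) = x + t0 • v := by rw [hΨadd, hΨx]
    have hG : ContinuousAt (fun w => |f (Ψ (w, c0 + t0)) - f (Ψ (w, c0))|) w0 := by
      apply ContinuousAt.abs
      apply ContinuousAt.sub
      · exact ContinuousAt.comp (by rw [hΨw2]; exact hcx2) hΨc2
      · exact ContinuousAt.comp (by rw [hΨx]; exact hcx) hΨc1
    obtain ⟨δ1, hδ1pos, hδ1⟩ := Metric.continuousAt_iff.mp hG ε hε
    obtain ⟨δ2, hδ2pos, hδ2⟩ := Metric.continuousAt_iff.mp hΨc1 (R/2) (by linarith)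
    set δ := min δ1 δ2 with hδdef
    have hδpos : 0 < δ := lt_min hδ1pos hδ2pos
    have hae : ∀ᵐ w : Fin m → ℝ, (∀ᵐ c : ℝ, Ψ (w, c) ∉ B) ∧ w ∉ π '' N :=
      (fub B hBmeas hB).and (measure_eq_zero_iff_ae_notMem.mp hπim)
    have hball : ∃ w ∈ Metric.ball w0 δ, (∀ᵐ c : ℝ, Ψ (w, c) ∉ B) ∧ w ∉ π '' N := by
      by_contra hcon
      push_neg at hcon
      have hsub : Metric.ball w0 δ ⊆ {w | ¬ ((∀ᵐ c : ℝ, Ψ (w, c) ∉ B) ∧ w ∉ π '' N)} :=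
        fun w hw hcontra => hcontra.2 (hcon w hw hcontra.1)
      have h0 := measure_mono_null hsub (ae_iff.mp hae)
      exact absurd h0 (Metric.measure_ball_pos volume w0 hδpos).ne'
    obtain ⟨w, hwball, hwB, hwN⟩ := hball
    have hwdist : dist w w0 < δ := Metric.mem_ball.mp hwball
    have hnear : dist (Ψ (w, c0)) x < R/2 := by
      have h1 := hδ2 (lt_of_lt_of_le hwdist (min_le_right _ _))
      rwa [hΨx] at h1
    have hseg : ∀ c ∈ Set.uIcc c0 (c0 + t0), Ψ (w, c) ∈ Ω := by
      intro c hc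
      rw [Set.uIcc_of_le (by linarith)] at hc
      apply hRΩ
      rw [Metric.mem_ball]
      calc dist (Ψ (w, c)) x ≤ dist (Ψ (w, c)) (Ψ (w, c0)) + dist (Ψ (w, c0)) x :=
            dist_triangle _ _ _
        _ < t0 + R/2 := by
            refine add_lt_add_of_le_of_lt ?_ hnear
            have hd : dist (Ψ (w, c)) (Ψ (w, c0)) = ‖(c - c0) • v‖ := by
              rw [hΨline w c0 c, dist_eq_norm, add_sub_cancel_left]
            rw [hd, norm_smul, hv, mul_one, Real.norm_eq_abs,
              abs_of_nonneg (by linarith [hc.1])]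
            linarith [hc.2]
        _ ≤ R := by linarith
    have hdiffline : ∀ c ∈ Set.uIcc c0 (c0 + t0), DifferentiableAt ℝ f (Ψ (w, c)) := by
      intro c hc
      by_contra hcon
      exact hwN ⟨Ψ (w, c), ⟨hseg c hc, hcon⟩, hπΨ w c⟩
    set g' : ℝ → ℝ := fun c => fderiv ℝ f (Ψ (w, c)) v with hg'def
    have hline : ∀ c : ℝ, HasDerivAt (fun c' => Ψ (w, c')) v c := by
      intro c
      have h1 : (fun c' => Ψ (w, c')) = fun c' => (c' - c) • v + Ψ (w, c) := by
        funext c'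
        exact (hΨline w c c').trans (add_comm _ _)
      rw [h1]
      have h2 : HasDerivAt (fun c' : ℝ => (c' - c)) 1 c := (hasDerivAt_id c).sub_const c
      simpa using (h2.smul_const v).add_const (Ψ (w, c))
    have hgderiv : ∀ c ∈ Set.uIcc c0 (c0 + t0), HasDerivAt (fun c' => f (Ψ (w, c'))) (g' c) c := by
      intro c hc
      have h1 := ((hdiffline c hc).hasFDerivAt).comp_hasDerivAt c (hline c)
      exact h1
    have hg'meas : Measurable g' := by
      have h1 : Measurable fun c : ℝ => Ψ (w, c) :=
        (hΨcont.comp (continuous_const.prodMk continuous_id)).measurable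
      exact ((ContinuousLinearMap.apply ℝ ℝ v).continuous.measurable).comp (hmeasf.comp h1)
    have hg'bound : ∀ᵐ c : ℝ, c ∈ Set.uIoc c0 (c0 + t0) → |g' c| ≤ C := by
      filter_upwards [hwB] with c hc hmem
      have hmem' : Ψ (w, c) ∈ Ω := hseg c (Set.uIoc_subset_uIcc hmem)
      have h2 : ‖fderiv ℝ f (Ψ (w, c))‖ ≤ C := by
        by_contra h3
        exact hc ⟨hmem', not_le.mp h3⟩
      calc |g' c| ≤ ‖fderiv ℝ f (Ψ (w, c))‖ * ‖v‖ := (fderiv ℝ f (Ψ (w, c))).le_opNorm v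
        _ = ‖fderiv ℝ f (Ψ (w, c))‖ := by rw [hv, mul_one]
        _ ≤ C := h2
    have hint : IntervalIntegrable g' volume c0 (c0 + t0) := by
      rw [intervalIntegrable_iff]
      refine Integrable.mono' (g := fun _ => C) (integrableOn_const ?_)
        hg'meas.aestronglyMeasurable ?_
      · exact measure_Ioc_lt_top.ne
      · rw [ae_restrict_iff' measurableSet_uIoc]
        filter_upwards [hg'bound] with c hc hmem
        rw [Real.norm_eq_abs]
        exact hc hmem
    have hFTC := intervalIntegral.integral_eq_sub_of_hasDerivAt hgderiv hint
    have hmain : |f (Ψ (w, c0 + t0)) - f (Ψ (w, c0))| ≤ C * t0 := by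
      have h1 := intervalIntegral.norm_integral_le_of_norm_le_const_ae (C := C) (f := g')
        (a := c0) (b := c0 + t0) (by
          filter_upwards [hg'bound] with c hc hmem
          rw [Real.norm_eq_abs]
          exact hc hmem)
      rw [hFTC] at h1
      rw [Real.norm_eq_abs] at h1
      calc |f (Ψ (w, c0 + t0)) - f (Ψ (w, c0))| ≤ C * |c0 + t0 - c0| := h1
        _ = C * t0 := by rw [add_sub_cancel_left, abs_of_pos ht0pos]
    have hGw := hδ1 (lt_of_lt_of_le hwdist (min_le_left _ _))
    rw [Real.dist_eq, hΨw2, hΨx] at hGw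
    have h5 : |f (x + t0 • v) - f x| - |f (Ψ (w, c0 + t0)) - f (Ψ (w, c0))| ≤ ε :=
      le_of_lt (lt_of_le_of_lt (le_abs_self _) (by rwa [abs_sub_comm] at hGw))
    linarith [hmain, h5]
  -- conclude the directional bound from difference quotients
  have hF : HasDerivAt (fun s : ℝ => f (x + s • v)) (fderiv ℝ f x v) 0 := by
    have h1 : HasDerivAt (fun s : ℝ => x + s • v) v 0 := by
      simpa using ((hasDerivAt_id (0:ℝ)).smul_const v).const_add x
    have h0 : x + (0:ℝ) • v = x := by simp
    have h2 : HasFDerivAt f (fderiv ℝ f x) (x + (0:ℝ) • v) := by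
      rw [h0]; exact hdx.hasFDerivAt
    exact h2.comp_hasDerivAt 0 h1
  have htend := hasDerivAt_iff_tendsto_slope.mp hF
  have htend2 : Filter.Tendsto (slope (fun s : ℝ => f (x + s • v)) 0)
      (nhdsWithin (0:ℝ) (Set.Ioi (0:ℝ))) (nhds (fderiv ℝ f x v)) :=
    htend.mono_left (nhdsWithin_mono 0 (fun s hs => ne_of_gt hs))
  have hub : ∀ᶠ s in nhdsWithin (0:ℝ) (Set.Ioi (0:ℝ)),
      |slope (fun s : ℝ => f (x + s • v)) 0 s| ≤ C := by
    filter_upwards [Ioo_mem_nhdsGT_of_mem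
      (Set.mem_Ico.mpr ⟨le_refl (0:ℝ), half_pos hR0⟩)] with s hs
    have hspos : (0:ℝ) < s := hs.1
    have h1 := key s hs
    rw [slope_def_field, sub_zero, abs_div, abs_of_pos hspos, div_le_iff₀ hspos]
    calc |f (x + s • v) - f (x + (0:ℝ) • v)| = |f (x + s • v) - f x| := by
          rw [zero_smul, add_zero]
      _ ≤ C * s := h1
  have habs : Filter.Tendsto (fun s : ℝ => |slope (fun s : ℝ => f (x + s • v)) 0 s|)
      (nhdsWithin (0:ℝ) (Set.Ioi (0:ℝ))) (nhds |fderiv ℝ f x v|) := htend2.abs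
  exact le_of_tendsto habs hub
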